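/- Let α > 2 with ⌊α⌋ = 2m even and α ∉ ℕ. Then for all λ ∈ [1/2, 1] and k ≥ 1: ∑_{j=−m}^m (1 + 2λ cos(2jπ/α) + λ²)^{αk/2} ≤ α (1+λ)^{αk}. -/

import Mathlib

open Real Finset

lemma cos_dirichlet_nonpos (α : ℝ) (m : ℕ) (hm : 1 ≤ m)
    (h1 : (2 * m : ℝ) < α) (h2 : α < 2 * m + 1) :
    ∑ j ∈ Finset.Icc (-(m : ℤ)) (m : ℤ), Real.cos (2 * j * Real.pi / α) ≤ 0 := by
  have hm1 : (1:ℝ) ≤ m := by exact_mod_cast hm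
  have hα0 : (2:ℝ) < α := by nlinarith
  have hα0' : (0:ℝ) < α := by linarith
  have hpi := Real.pi_pos
  -- reindex
  have hmap : Finset.Icc (-(m : ℤ)) (m : ℤ) =
      Finset.map ⟨fun i : ℕ => (i : ℤ) - m, show Function.Injective _ from by
        intro a b h; simp only [sub_left_inj, Int.natCast_inj] at h; exact h⟩
      (Finset.range (2*m+1)) := by
    ext j
    simp only [Finset.mem_Icc, Finset.mem_map, Finset.mem_range, Function.Embedding.coeFn_mk]
    constructor
    · intro h; exact ⟨(j + m).toNat, by omega, by omega⟩
    · rintro ⟨a, ha, rfl⟩; omega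
  rw [hmap, Finset.sum_map]
  simp only [Function.Embedding.coeFn_mk]
  have hSsum : ∀ i : ℕ, Real.cos (2 * (((i:ℤ) - (m:ℤ) : ℤ) : ℝ) * Real.pi / α)
      = Real.cos (2 * ((i:ℝ) - m) * Real.pi / α) := by
    intro i; congr 1; push_cast; ring
  simp only [hSsum]
  set S := ∑ i ∈ Finset.range (2*m+1), Real.cos (2 * ((i:ℝ) - m) * Real.pi / α) with hS
  have key : 2 * Real.sin (Real.pi / α) * S = 2 * Real.sin ((2*m+1) * Real.pi / α) := by
    calc 2 * Real.sin (Real.pi / α) * S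
        = ∑ i ∈ Finset.range (2*m+1),
            (Real.sin ((2*((i:ℝ)+1) - 2*m - 1) * Real.pi / α)
              - Real.sin ((2*(i:ℝ) - 2*m - 1) * Real.pi / α)) := by
          rw [hS, Finset.mul_sum]
          apply Finset.sum_congr rfl
          intro i _
          have e1 : (2*((i:ℝ)+1) - 2*m - 1) * Real.pi / α
              = (2*(i:ℝ) - 2*m) * Real.pi / α + Real.pi / α := by ring
          have e2 : (2*(i:ℝ) - 2*m - 1) * Real.pi / α
              = (2*(i:ℝ) - 2*m) * Real.pi / α - Real.pi / α := by ring
          have e3 : 2 * ((i:ℝ) - m) * Real.pi / α = (2*(i:ℝ) - 2*m) * Real.pi / α := by ring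
          rw [e1, e2, e3, Real.sin_add, Real.sin_sub]
          ring
      _ = Real.sin ((2*(((2*m+1 : ℕ)):ℝ) - 2*m - 1) * Real.pi / α)
            - Real.sin ((2*((0:ℕ):ℝ) - 2*m - 1) * Real.pi / α) := by
          have := Finset.sum_range_sub (fun i : ℕ => Real.sin ((2*(i:ℝ) - 2*m - 1) * Real.pi / α)) (2*m+1)
          push_cast at this ⊢
          convert this using 2 with i
      _ = 2 * Real.sin ((2*m+1) * Real.pi / α) := by
          have e4 : (2*(((2*m+1 : ℕ)):ℝ) - 2*m - 1) * Real.pi / α = (2*m+1) * Real.pi / α := by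
            push_cast; ring
          have e5 : (2*((0:ℕ):ℝ) - 2*m - 1) * Real.pi / α = -((2*m+1) * Real.pi / α) := by
            push_cast; ring
          rw [e4, e5, Real.sin_neg]; ring
  have hsin1 : 0 < Real.sin (Real.pi / α) := by
    apply Real.sin_pos_of_pos_of_lt_pi
    · positivity
    · rw [div_lt_iff₀ hα0']; nlinarith
  have hsin2 : Real.sin ((2*m+1) * Real.pi / α) ≤ 0 := by
    set θ := (2*m+1) * Real.pi / α with hθ
    have hθ1 : Real.pi < θ := by
      rw [hθ, lt_div_iff₀ hα0']; nlinarith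
    have hθ2 : θ ≤ 2 * Real.pi := by
      rw [hθ, div_le_iff₀ hα0']; nlinarith
    have hsp : Real.sin (θ - Real.pi) = -Real.sin θ := Real.sin_sub_pi θ
    nlinarith [Real.sin_nonneg_of_nonneg_of_le_pi (x := θ - Real.pi) (by linarith) (by linarith)]
  nlinarith

theorem cos_sum_bound (α : ℝ) (m : ℕ) (hm : 1 ≤ m)
    (h1 : (2 * m : ℝ) < α) (h2 : α < 2 * m + 1)
    (l : ℝ) (hl : l ∈ Set.Icc (1/2 : ℝ) 1) (k : ℕ) (hk : 1 ≤ k) :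
    ∑ j ∈ Finset.Icc (-(m : ℤ)) (m : ℤ),
        (1 + 2 * l * Real.cos (2 * j * Real.pi / α) + l ^ 2) ^ (α * k / 2) ≤
      α * (1 + l) ^ (α * k) := by
  obtain ⟨hl1, hl2⟩ := hl
  have hm1 : (1:ℝ) ≤ m := by exact_mod_cast hm
  have hα2 : (2:ℝ) < α := by nlinarith
  have hk1 : (1:ℝ) ≤ k := by exact_mod_cast hk
  have hαk : (2:ℝ) ≤ α * k := by nlinarith
  set p : ℝ := α * k / 2 with hp
  have hp1 : 1 ≤ p := by rw [hp]; linarith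
  have hM0 : (0:ℝ) < 1 + l := by linarith
  set M : ℝ := (1 + l) ^ 2 with hMdef
  have hM0' : (0:ℝ) < M := by positivity
  -- pointwise bounds on the base
  have hbase : ∀ j ∈ Finset.Icc (-(m:ℤ)) (m:ℤ),
      0 ≤ 1 + 2 * l * Real.cos (2 * j * Real.pi / α) + l ^ 2 ∧
      1 + 2 * l * Real.cos (2 * j * Real.pi / α) + l ^ 2 ≤ M := by
    intro j _
    have hc1 := Real.neg_one_le_cos (2 * j * Real.pi / α)
    have hc2 := Real.cos_le_one (2 * j * Real.pi / α)
    constructor <;> [nlinarith; nlinarith]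
  -- pointwise rpow bound: b^p ≤ M^(p-1) * b
  have hterm : ∀ j ∈ Finset.Icc (-(m:ℤ)) (m:ℤ),
      (1 + 2 * l * Real.cos (2 * j * Real.pi / α) + l ^ 2) ^ p
        ≤ M ^ (p - 1) * (1 + 2 * l * Real.cos (2 * j * Real.pi / α) + l ^ 2) := by
    intro j hj
    obtain ⟨hb0, hbM⟩ := hbase j hj
    set b := 1 + 2 * l * Real.cos (2 * j * Real.pi / α) + l ^ 2
    rcases eq_or_lt_of_le hb0 with h0 | h0
    · rw [← h0, Real.zero_rpow (by linarith), mul_zero]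
    · have heq : b ^ (p - 1) * b = b ^ p := by
        rw [← Real.rpow_add_one h0.ne']; norm_num
      rw [← heq]
      have hle : b ^ (p - 1) ≤ M ^ (p - 1) :=
        Real.rpow_le_rpow hb0 hbM (by linarith)
      exact mul_le_mul_of_nonneg_right hle hb0
  -- sum of the bases
  have hcard : (Finset.Icc (-(m:ℤ)) (m:ℤ)).card = 2 * m + 1 := by
    rw [Int.card_Icc]; omega
  have hS := cos_dirichlet_nonpos α m hm h1 h2
  have hlin : ∑ j ∈ Finset.Icc (-(m:ℤ)) (m:ℤ),
      (1 + 2 * l * Real.cos (2 * j * Real.pi / α) + l ^ 2) ≤ α * M := by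
    have hsplit : ∑ j ∈ Finset.Icc (-(m:ℤ)) (m:ℤ),
        (1 + 2 * l * Real.cos (2 * j * Real.pi / α) + l ^ 2)
        = (2 * m + 1) * (1 + l ^ 2)
          + 2 * l * ∑ j ∈ Finset.Icc (-(m:ℤ)) (m:ℤ), Real.cos (2 * j * Real.pi / α) := by
      have hterms : ∀ j ∈ Finset.Icc (-(m:ℤ)) (m:ℤ),
          1 + 2 * l * Real.cos (2 * j * Real.pi / α) + l ^ 2
          = (1 + l ^ 2) + 2 * l * Real.cos (2 * j * Real.pi / α) := by intro j _; ring
      rw [Finset.sum_congr rfl hterms, Finset.sum_add_distrib, Finset.sum_const, hcard,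
        ← Finset.mul_sum]
      push_cast; ring
    rw [hsplit, hMdef]
    nlinarith
  calc ∑ j ∈ Finset.Icc (-(m:ℤ)) (m:ℤ),
      (1 + 2 * l * Real.cos (2 * j * Real.pi / α) + l ^ 2) ^ p
      ≤ ∑ j ∈ Finset.Icc (-(m:ℤ)) (m:ℤ),
          M ^ (p - 1) * (1 + 2 * l * Real.cos (2 * j * Real.pi / α) + l ^ 2) :=
        Finset.sum_le_sum hterm
    _ = M ^ (p - 1) * ∑ j ∈ Finset.Icc (-(m:ℤ)) (m:ℤ),
          (1 + 2 * l * Real.cos (2 * j * Real.pi / α) + l ^ 2) := by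
        rw [Finset.mul_sum]
    _ ≤ M ^ (p - 1) * (α * M) := by
        apply mul_le_mul_of_nonneg_left hlin
        positivity
    _ = α * M ^ p := by
        rw [show M ^ (p-1) * (α * M) = α * (M ^ (p-1) * M ^ (1:ℝ)) by rw [Real.rpow_one]; ring,
          ← Real.rpow_add hM0']
        norm_num
    _ = α * (1 + l) ^ (α * k) := by
        congr 1
        rw [hMdef, ← Real.rpow_natCast (1 + l) 2, ← Real.rpow_mul hM0.le]
        congr 1
        rw [hp]; push_cast; ring
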